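/- Let s ≥ 2, h ≥ 2 be integers, m = 2^{h+s+3}·s^s·h^{2s}, and let G be a K_{s,s}-free graph. For any collection of sets S_1, ..., S_k ⊆ V(G), each of size m and pairwise disjoint, with k ≤ h: if for each pair i < j one picks φ(i) ∈ S_i, φ(j) ∈ S_j uniformly and independently at random, then the probability that some pair φ(i)φ(j) is an edge of G is less than 1/2. -/

import Mathlib

open Finset

/-- A graph is `K_{s,s}`-free if it contains no complete bipartite subgraph with
two disjoint parts of size `s`. -/
def KssFree {V : Type*} (s : ℕ) (G : SimpleGraph V) : Prop :=
  ¬ ∃ (A B : Finset V), A.card = s ∧ B.card = s ∧ Disjoint A B ∧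
      ∀ a ∈ A, ∀ b ∈ B, G.Adj a b

lemma sq_le_two_pow : ∀ n : ℕ, n * n ≤ 2 ^ (n + 1) := by
  intro n
  induction n with
  | zero => simp
  | succ k ih =>
    have he : (k+1) * (k+1) = k * k + (2*k+1) := by ring
    rw [he]
    calc k*k + (2*k+1) ≤ 2^(k+1) + 2^(k+1) := by
          refine Nat.add_le_add ih ?_
          have h2 : k < 2 ^ k := Nat.lt_two_pow_self
          have : 2*k < 2*2^k := by omega
          simpa [pow_succ, mul_comm] using this
      _ = 2^(k+1+1) := by ring

lemma pow_le_choose' (t s d : ℕ) (ht : 1 ≤ t) (h : s * t ≤ d) : t ^ s ≤ d.choose s := by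
  have key : t ^ s * s.factorial ≤ d.descFactorial s := by
    rw [Nat.descFactorial_eq_prod_range]
    have hfac : (∏ i ∈ range s, (s - i)) = s.factorial := by
      rw [← Finset.prod_range_add_one_eq_factorial,
        ← Finset.prod_range_reflect (fun j => j + 1) s]
      refine Finset.prod_congr rfl fun i hi => ?_
      have := Finset.mem_range.mp hi
      omega
    calc t ^ s * s.factorial = ∏ i ∈ range s, (t * (s - i)) := by
          rw [Finset.prod_mul_distrib, Finset.prod_const, hfac, Finset.card_range]
      _ ≤ ∏ i ∈ range s, (d - i) := by
          refine Finset.prod_le_prod' fun i hi => ?_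
          have his := Finset.mem_range.mp hi
          have h1 : t * (s - i) + t * i = t * s := by
            rw [← Nat.mul_add]; congr 1; omega
          have h2 : t * (s - i) + i ≤ d := by
            have h3 : t * (s - i) + i ≤ t * (s - i) + t * i :=
              Nat.add_le_add_left (Nat.le_mul_of_pos_left i ht) _
            have h4 : t * s ≤ d := by rwa [Nat.mul_comm] at h
            omega
          omega
  rw [Nat.descFactorial_eq_factorial_mul_choose] at key
  exact Nat.le_of_mul_le_mul_left (by
    calc s.factorial * t ^ s = t ^ s * s.factorial := Nat.mul_comm _ _
      _ ≤ s.factorial * d.choose s := key) s.factorial_pos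

lemma sum_choose_le {V : Type*} [DecidableEq V] (G : SimpleGraph V) [DecidableRel G.Adj]
    (s : ℕ) (hG : KssFree s G) (A B : Finset V) (hAB : Disjoint A B) :
    ∑ b ∈ B, ((A.filter (fun a => G.Adj a b)).card.choose s)
      ≤ (s - 1) * A.card.choose s := by
  have step1 : ∀ b, (A.filter (fun a => G.Adj a b)).card.choose s
      = ∑ P ∈ A.powersetCard s, (if ∀ a ∈ P, G.Adj a b then 1 else 0) := by
    intro b
    rw [← Finset.card_filter, ← Finset.card_powersetCard]
    congr 1
    ext P
    simp only [Finset.mem_powersetCard, Finset.mem_filter, Finset.subset_iff,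
      Finset.mem_filter]
    constructor
    · rintro ⟨hsub, hc⟩
      exact ⟨⟨fun _ hx => (hsub hx).1, hc⟩, fun a ha => (hsub ha).2⟩
    · rintro ⟨⟨hsub, hc⟩, hadj⟩
      exact ⟨fun x hx => ⟨hsub hx, hadj x hx⟩, hc⟩
  calc ∑ b ∈ B, (A.filter (fun a => G.Adj a b)).card.choose s
      = ∑ b ∈ B, ∑ P ∈ A.powersetCard s, (if ∀ a ∈ P, G.Adj a b then 1 else 0) :=
        Finset.sum_congr rfl fun b _ => step1 b
    _ = ∑ P ∈ A.powersetCard s, ∑ b ∈ B, (if ∀ a ∈ P, G.Adj a b then 1 else 0) :=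
        Finset.sum_comm
    _ ≤ ∑ _P ∈ A.powersetCard s, (s - 1) := by
        refine Finset.sum_le_sum fun P hP => ?_
        rw [← Finset.card_filter]
        obtain ⟨hPA, hPcard⟩ := Finset.mem_powersetCard.mp hP
        by_contra hcon
        push_neg at hcon
        have hsle : s ≤ (B.filter (fun b => ∀ a ∈ P, G.Adj a b)).card := by omega
        obtain ⟨B', hB'sub, hB'card⟩ := Finset.exists_subset_card_eq hsle
        refine hG ⟨P, B', hPcard, hB'card, ?_, ?_⟩
        · exact Finset.disjoint_of_subset_left hPA
            (Finset.disjoint_of_subset_right (hB'sub.trans (Finset.filter_subset _ _)) hAB)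
        · intro a ha b hb
          exact (Finset.mem_filter.mp (hB'sub hb)).2 a ha
    _ = (s - 1) * A.card.choose s := by
        rw [Finset.sum_const, smul_eq_mul, Finset.card_powersetCard, Nat.mul_comm]

lemma edge_bound {V : Type*} [DecidableEq V] (G : SimpleGraph V) [DecidableRel G.Adj]
    (s h m T : ℕ) (hs : 1 ≤ s) (hT : 1 ≤ T) (hG : KssFree s G)
    (hmT : m = 2 * s * h ^ 2 * T) (hbig : (2 * s * h ^ 2) ^ s * (4 * h ^ 2) ≤ m)
    (A B : Finset V) (hA : A.card = m) (hB : B.card = m) (hAB : Disjoint A B) :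
    4 * h ^ 2 * ((A ×ˢ B).filter (fun p => G.Adj p.1 p.2)).card ≤ 3 * m ^ 2 := by
  set d : V → ℕ := fun b => (A.filter (fun a => G.Adj a b)).card with hd
  have hE : ((A ×ˢ B).filter (fun p => G.Adj p.1 p.2)).card = ∑ b ∈ B, d b := by
    rw [Finset.card_filter, Finset.sum_product_right]
    exact Finset.sum_congr rfl fun b _ => (Finset.card_filter _ _).symm
  set big := B.filter (fun b => s * T ≤ d b) with hbigdef
  have hbigcard : big.card * T ^ s ≤ m ^ s := by
    calc big.card * T ^ s = ∑ _b ∈ big, T ^ s := by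
          rw [Finset.sum_const, smul_eq_mul, Nat.mul_comm]
      _ ≤ ∑ b ∈ big, (d b).choose s :=
          Finset.sum_le_sum fun b hb =>
            pow_le_choose' T s (d b) hT (Finset.mem_filter.mp hb).2
      _ ≤ ∑ b ∈ B, (d b).choose s :=
          Finset.sum_le_sum_of_subset (Finset.filter_subset _ _)
      _ ≤ (s - 1) * A.card.choose s := sum_choose_le G s hG A B hAB
      _ ≤ m ^ s := by
          rw [hA]
          calc (s - 1) * m.choose s ≤ s.factorial * m.choose s :=
                Nat.mul_le_mul_right _ (le_trans (by omega) s.self_le_factorial)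
            _ = m.descFactorial s := (Nat.descFactorial_eq_factorial_mul_choose m s).symm
            _ ≤ m ^ s := Nat.descFactorial_le_pow m s
  have hbig2 : big.card ≤ (2 * s * h ^ 2) ^ s := by
    refine Nat.le_of_mul_le_mul_right ?_ (Nat.pow_pos (n := s) hT)
    calc big.card * T ^ s ≤ m ^ s := hbigcard
      _ = (2 * s * h ^ 2) ^ s * T ^ s := by rw [hmT, mul_pow]
  have hsum : ∑ b ∈ B, d b ≤ m * (s * T) + big.card * m := by
    rw [← Finset.sum_filter_add_sum_filter_not B (fun b => s * T ≤ d b)]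
    have h1 : ∑ b ∈ B.filter (fun b => s * T ≤ d b), d b ≤ big.card * m := by
      calc ∑ b ∈ big, d b ≤ ∑ _b ∈ big, m :=
            Finset.sum_le_sum fun b _ =>
              le_of_le_of_eq (Finset.card_filter_le A _) hA
        _ = big.card * m := by rw [Finset.sum_const, smul_eq_mul]
    have h2 : ∑ b ∈ B.filter (fun b => ¬ s * T ≤ d b), d b ≤ m * (s * T) := by
      calc ∑ b ∈ B.filter (fun b => ¬ s * T ≤ d b), d b
          ≤ ∑ _b ∈ B.filter (fun b => ¬ s * T ≤ d b), (s * T) :=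
            Finset.sum_le_sum fun b hb => le_of_lt (by
              have := (Finset.mem_filter.mp hb).2; omega)
        _ = (B.filter (fun b => ¬ s * T ≤ d b)).card * (s * T) := by
            rw [Finset.sum_const, smul_eq_mul]
        _ ≤ m * (s * T) :=
            Nat.mul_le_mul_right _ ((Finset.card_filter_le _ _).trans (le_of_eq hB))
    omega
  have e1 : 4 * h ^ 2 * (m * (s * T)) = 2 * m ^ 2 := by rw [hmT]; ring
  have e2 : 4 * h ^ 2 * (big.card * m) ≤ m ^ 2 := by
    calc 4 * h ^ 2 * (big.card * m) = big.card * (4 * h ^ 2) * m := by ring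
      _ ≤ (2 * s * h ^ 2) ^ s * (4 * h ^ 2) * m :=
          Nat.mul_le_mul_right _ (Nat.mul_le_mul_right _ hbig2)
      _ ≤ m * m := Nat.mul_le_mul_right _ hbig
      _ = m ^ 2 := (sq m).symm
  calc 4 * h ^ 2 * ((A ×ˢ B).filter (fun p => G.Adj p.1 p.2)).card
      = 4 * h ^ 2 * (∑ b ∈ B, d b) := by rw [hE]
    _ ≤ 4 * h ^ 2 * (m * (s * T) + big.card * m) := Nat.mul_le_mul_left _ hsum
    _ = 4 * h ^ 2 * (m * (s * T)) + 4 * h ^ 2 * (big.card * m) := by ring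
    _ ≤ 2 * m ^ 2 + m ^ 2 := by rw [e1]; exact Nat.add_le_add_left e2 _
    _ = 3 * m ^ 2 := by ring

lemma pair_count {V : Type*} [Fintype V] [DecidableEq V]
    (G : SimpleGraph V) [DecidableRel G.Adj] (k : ℕ) (S : Fin k → Finset V) (m : ℕ)
    (hcard : ∀ i, (S i).card = m) (hm : 0 < m) (i j : Fin k) (hij : i ≠ j) :
    (univ.filter fun φ : Fin k → V => (∀ l, φ l ∈ S l) ∧ G.Adj (φ i) (φ j)).card
      ≤ ((S i ×ˢ S j).filter fun p => G.Adj p.1 p.2).card * m ^ (k - 2) := by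
  obtain ⟨a0, ha0⟩ := Finset.card_pos.mp (by rw [hcard i]; exact hm)
  obtain ⟨b0, hb0⟩ := Finset.card_pos.mp (by rw [hcard j]; exact hm)
  set S' : Fin k → Finset V := fun l => if l = i then {a0} else if l = j then {b0} else S l
    with hS'
  have hmain : (univ.filter fun φ : Fin k → V => (∀ l, φ l ∈ S l) ∧ G.Adj (φ i) (φ j)).card
      ≤ (((S i ×ˢ S j).filter fun p => G.Adj p.1 p.2) ×ˢ Fintype.piFinset S').card := by
    apply Finset.card_le_card_of_injOn
      (fun φ => ((φ i, φ j), fun l => if l = i then a0 else if l = j then b0 else φ l))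
    · intro φ hφ
      obtain ⟨-, hmem, hadj⟩ := Finset.mem_filter.mp hφ
      refine Finset.mem_product.mpr ⟨?_, ?_⟩
      · exact Finset.mem_filter.mpr ⟨Finset.mem_product.mpr ⟨hmem i, hmem j⟩, hadj⟩
      · refine Fintype.mem_piFinset.mpr fun l => ?_
        by_cases hli : l = i
        · simp [hS', hli]
        · by_cases hlj : l = j
          · simp [hS', hli, hlj, hij.symm]
          · simpa [hS', hli, hlj] using hmem l
    · intro φ hφ ψ hψ heq
      have h1 : φ i = ψ i := congrArg (fun x => x.1.1) heq
      have h2 : φ j = ψ j := congrArg (fun x => x.1.2) heq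
      have h3 := fun l => congrFun (congrArg Prod.snd heq) l
      funext l
      by_cases hli : l = i
      · rw [hli]; exact h1
      · by_cases hlj : l = j
        · rw [hlj]; exact h2
        · have := h3 l
          simpa [hli, hlj] using this
  have hprod : (Fintype.piFinset S').card = m ^ (k - 2) := by
    rw [Fintype.card_piFinset]
    rw [← Finset.mul_prod_erase univ _ (Finset.mem_univ i)]
    have hji : j ∈ univ.erase i := Finset.mem_erase.mpr ⟨hij.symm, Finset.mem_univ j⟩
    rw [← Finset.mul_prod_erase _ _ hji]
    have e1 : (S' i).card = 1 := by simp [hS']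
    have e2 : (S' j).card = 1 := by simp [hS', hij.symm]
    rw [e1, e2, one_mul, one_mul]
    have e3 : ∀ l ∈ (univ.erase i).erase j, (S' l).card = m := by
      intro l hl
      have h' := Finset.mem_erase.mp hl
      have hlj : l ≠ j := h'.1
      have hli : l ≠ i := (Finset.mem_erase.mp h'.2).1
      simp [hS', hli, hlj, hcard l]
    have e4 : ((univ.erase i).erase j).card = k - 2 := by
      have h1 : ((univ : Finset (Fin k)).erase i).card = k - 1 := by
        rw [Finset.card_erase_of_mem (Finset.mem_univ i), Finset.card_univ, Fintype.card_fin]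
      rw [Finset.card_erase_of_mem hji, h1, Nat.sub_sub]
    have e5 := Finset.prod_eq_pow_card e3
    rw [e4] at e5
    exact e5
  calc (univ.filter fun φ : Fin k → V => (∀ l, φ l ∈ S l) ∧ G.Adj (φ i) (φ j)).card
      ≤ (((S i ×ˢ S j).filter fun p => G.Adj p.1 p.2) ×ˢ Fintype.piFinset S').card := hmain
    _ = ((S i ×ˢ S j).filter fun p => G.Adj p.1 p.2).card * m ^ (k - 2) := by
        rw [Finset.card_product, hprod]

/-- for random independent uniform choices `φ i ∈ S i` from pairwise disjoint
`m`-sets in a `K_{s,s}`-free graph, the probability that some pair `φ i φ j` is an edge is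
less than `1/2`; equivalently, fewer than `m^k / 2` of the `m^k` choice functions contain
an edge. -/
theorem stmt_13 {V : Type*} [Fintype V] [DecidableEq V]
    (G : SimpleGraph V) [DecidableRel G.Adj]
    (s h k : ℕ) (hs : 2 ≤ s) (hh : 2 ≤ h) (hk : k ≤ h)
    (m : ℕ) (hm : m = 2 ^ (h + s + 3) * s ^ s * h ^ (2 * s))
    (hG : KssFree s G)
    (S : Fin k → Finset V) (hcard : ∀ i, (S i).card = m)
    (hdisj : ∀ i j, i ≠ j → Disjoint (S i) (S j)) :
    ((Finset.univ.filter (fun φ : Fin k → V =>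
        (∀ i, φ i ∈ S i) ∧ ∃ i j, i ≠ j ∧ G.Adj (φ i) (φ j))).card : ℝ)
      < (1 / 2) * (m : ℝ) ^ k := by
  have hs0 : 0 < s := by omega
  have hh0 : 0 < h := by omega
  have hm0 : 0 < m := by rw [hm]; positivity
  rcases Nat.lt_or_ge k 2 with hk2 | hk2
  · have hempty : (Finset.univ.filter (fun φ : Fin k → V =>
        (∀ i, φ i ∈ S i) ∧ ∃ i j, i ≠ j ∧ G.Adj (φ i) (φ j))) = ∅ := by
      rw [Finset.filter_eq_empty_iff]
      rintro φ - ⟨-, i, j, hij, -⟩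
      exact hij (Fin.ext (by omega))
    rw [hempty]
    simp only [Finset.card_empty, Nat.cast_zero]
    positivity
  · -- main case
    obtain ⟨T, hTdef⟩ : ∃ T, T = 2 ^ (h + s + 2) * s ^ (s - 1) * h ^ (2 * s - 2) := ⟨_, rfl⟩
    have hT1 : 1 ≤ T := by
      have : 0 < T := by rw [hTdef]; positivity
      omega
    have hmT : m = 2 * s * h ^ 2 * T := by
      rw [hm, hTdef]
      have e1 : (2:ℕ) ^ (h + s + 3) = 2 * 2 ^ (h + s + 2) := by
        rw [← pow_succ']
      have e2 : s ^ s = s * s ^ (s - 1) := by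
        rw [← pow_succ']
        congr 1
        omega
      have e3 : h ^ (2 * s) = h ^ 2 * h ^ (2 * s - 2) := by
        rw [← pow_add]
        congr 1
        omega
      rw [e1, e2, e3]; ring
    have hkey : (2 * s * h ^ 2) ^ s * (4 * h ^ 2) ≤ m := by
      have e1 : (2 * s * h ^ 2) ^ s * (4 * h ^ 2)
          = (s ^ s * h ^ (2 * s)) * (2 ^ s * 4 * h ^ 2) := by
        rw [mul_pow, mul_pow, ← pow_mul]
        ring
      have e2 : m = (s ^ s * h ^ (2 * s)) * 2 ^ (h + s + 3) := by rw [hm]; ring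
      rw [e1, e2]
      refine Nat.mul_le_mul_left _ ?_
      have hsq : h ^ 2 ≤ 2 ^ (h + 1) := by
        calc h ^ 2 = h * h := sq h
          _ ≤ 2 ^ (h + 1) := sq_le_two_pow h
      calc 2 ^ s * 4 * h ^ 2 ≤ 2 ^ s * 4 * 2 ^ (h + 1) := Nat.mul_le_mul_left _ hsq
        _ = 2 ^ (h + s + 3) := by rw [pow_add, pow_add, pow_add]; ring
    -- per-pair bound
    have hpair : ∀ p : Fin k × Fin k, p.1 < p.2 → 4 * h ^ 2 * (Finset.univ.filter
        (fun φ : Fin k → V => (∀ l, φ l ∈ S l) ∧ G.Adj (φ p.1) (φ p.2))).card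
        ≤ 3 * m ^ k := by
      rintro ⟨i, j⟩ hij
      have hij' : i ≠ j := Fin.ne_of_lt hij
      have h1 := pair_count G k S m hcard hm0 i j hij'
      have h2 := edge_bound G s h m T hs0 hT1 hG hmT hkey (S i) (S j)
        (hcard i) (hcard j) (hdisj i j hij')
      calc 4 * h ^ 2 * (Finset.univ.filter
            (fun φ : Fin k → V => (∀ l, φ l ∈ S l) ∧ G.Adj (φ i) (φ j))).card
          ≤ 4 * h ^ 2 * (((S i ×ˢ S j).filter (fun p => G.Adj p.1 p.2)).card * m ^ (k - 2)) :=
            Nat.mul_le_mul_left _ h1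
        _ = (4 * h ^ 2 * ((S i ×ˢ S j).filter (fun p => G.Adj p.1 p.2)).card) * m ^ (k - 2) :=
            (Nat.mul_assoc _ _ _).symm
        _ ≤ (3 * m ^ 2) * m ^ (k - 2) := Nat.mul_le_mul_right _ h2
        _ = 3 * m ^ k := by
            rw [Nat.mul_assoc, ← pow_add]
            congr 2
            clear h1 h2
            omega
    -- number of pairs
    set Pr : Finset (Fin k × Fin k) := Finset.univ.filter (fun p => p.1 < p.2) with hPrdef
    have hPrcard : 2 * Pr.card ≤ k * k - k := by
      have hinj : Function.Injective (Prod.swap : Fin k × Fin k → Fin k × Fin k) :=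
        Prod.swap_injective
      have himg : (Pr.image Prod.swap).card = Pr.card := Finset.card_image_of_injective _ hinj
      have hdisj2 : Disjoint Pr (Pr.image Prod.swap) := by
        rw [Finset.disjoint_left]
        intro p hp hp'
        have h1 : p.1 < p.2 := (Finset.mem_filter.mp hp).2
        obtain ⟨q, hq, hqp⟩ := Finset.mem_image.mp hp'
        have h2 : q.1 < q.2 := (Finset.mem_filter.mp hq).2
        rw [← hqp] at h1
        simp only [Prod.fst_swap, Prod.snd_swap] at h1
        exact absurd h1 (not_lt.mpr h2.le)
      have hsub : Pr ∪ Pr.image Prod.swap ⊆ Finset.univ.offDiag := by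
        intro p hp
        rcases Finset.mem_union.mp hp with hp | hp
        · have := (Finset.mem_filter.mp hp).2
          exact Finset.mem_offDiag.mpr ⟨Finset.mem_univ _, Finset.mem_univ _, Fin.ne_of_lt this⟩
        · obtain ⟨q, hq, hqp⟩ := Finset.mem_image.mp hp
          have := (Finset.mem_filter.mp hq).2
          refine Finset.mem_offDiag.mpr ⟨Finset.mem_univ _, Finset.mem_univ _, ?_⟩
          rw [← hqp]
          simp only [Prod.fst_swap, Prod.snd_swap]
          exact (Fin.ne_of_lt this).symm
      have hle := Finset.card_le_card hsub
      rw [Finset.card_union_of_disjoint hdisj2, himg, Finset.offDiag_card,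
        Finset.card_univ, Fintype.card_fin] at hle
      omega
    have hkk : k * k - k ≤ h * h - h := by
      have e1 : (k - 1) * k = k * k - k := by rw [tsub_mul, one_mul]
      have e2 : (h - 1) * h = h * h - h := by rw [tsub_mul, one_mul]
      rw [← e1, ← e2]
      exact Nat.mul_le_mul (by omega) hk
    have hmk : 0 < m ^ k := Nat.one_le_pow _ _ hm0
    have hlt : 3 * (h * h - h) * m ^ k < 4 * h ^ 2 * m ^ k := by
      refine (Nat.mul_lt_mul_right hmk).mpr ?_
      have h5 : h ≤ h * h := Nat.le_mul_of_pos_left h hh0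
      have e : h ^ 2 = h * h := sq h
      omega
    -- union bound
    have hcover : (Finset.univ.filter (fun φ : Fin k → V =>
        (∀ i, φ i ∈ S i) ∧ ∃ i j, i ≠ j ∧ G.Adj (φ i) (φ j)))
        ⊆ Pr.biUnion (fun p => Finset.univ.filter
            (fun φ : Fin k → V => (∀ l, φ l ∈ S l) ∧ G.Adj (φ p.1) (φ p.2))) := by
      intro φ hφ
      obtain ⟨-, hmem, i, j, hij, hadj⟩ := Finset.mem_filter.mp hφ
      rcases lt_or_gt_of_ne hij with hlt' | hgt
      · exact Finset.mem_biUnion.mpr ⟨(i, j),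
          Finset.mem_filter.mpr ⟨Finset.mem_univ _, hlt'⟩,
          Finset.mem_filter.mpr ⟨Finset.mem_univ _, hmem, hadj⟩⟩
      · exact Finset.mem_biUnion.mpr ⟨(j, i),
          Finset.mem_filter.mpr ⟨Finset.mem_univ _, hgt⟩,
          Finset.mem_filter.mpr ⟨Finset.mem_univ _, hmem, hadj.symm⟩⟩
    obtain ⟨cnt, hcnt⟩ : ∃ c, c = (Finset.univ.filter (fun φ : Fin k → V =>
        (∀ i, φ i ∈ S i) ∧ ∃ i j, i ≠ j ∧ G.Adj (φ i) (φ j))).card := ⟨_, rfl⟩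
    have hcount : cnt ≤ ∑ p ∈ Pr, (Finset.univ.filter
        (fun φ : Fin k → V => (∀ l, φ l ∈ S l) ∧ G.Adj (φ p.1) (φ p.2))).card := by
      rw [hcnt]
      exact le_trans (Finset.card_le_card hcover) (Finset.card_biUnion_le)
    have hfinal : 4 * h ^ 2 * cnt ≤ Pr.card * (3 * m ^ k) := by
      calc 4 * h ^ 2 * cnt
          ≤ 4 * h ^ 2 * ∑ p ∈ Pr, (Finset.univ.filter
              (fun φ : Fin k → V => (∀ l, φ l ∈ S l) ∧ G.Adj (φ p.1) (φ p.2))).card :=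
            Nat.mul_le_mul_left _ hcount
        _ = ∑ p ∈ Pr, 4 * h ^ 2 * (Finset.univ.filter
              (fun φ : Fin k → V => (∀ l, φ l ∈ S l) ∧ G.Adj (φ p.1) (φ p.2))).card :=
            Finset.mul_sum _ _ _
        _ ≤ ∑ p ∈ Pr, 3 * m ^ k :=
            Finset.sum_le_sum fun p hp => hpair p (Finset.mem_filter.mp hp).2
        _ = Pr.card * (3 * m ^ k) := by rw [Finset.sum_const, smul_eq_mul]
    have hnat : 2 * cnt < m ^ k := by
      have step : 8 * h ^ 2 * cnt ≤ 3 * (k * k - k) * m ^ k := by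
        calc 8 * h ^ 2 * cnt = 2 * (4 * h ^ 2 * cnt) := by ring
          _ ≤ 2 * (Pr.card * (3 * m ^ k)) := Nat.mul_le_mul_left _ hfinal
          _ = (2 * Pr.card) * (3 * m ^ k) := by ring
          _ ≤ (k * k - k) * (3 * m ^ k) := Nat.mul_le_mul_right _ hPrcard
          _ = 3 * (k * k - k) * m ^ k := by ring
      have hstep2 : 8 * h ^ 2 * cnt < 4 * h ^ 2 * m ^ k := by
        calc 8 * h ^ 2 * cnt ≤ 3 * (k * k - k) * m ^ k := step
          _ ≤ 3 * (h * h - h) * m ^ k := Nat.mul_le_mul_right _ (Nat.mul_le_mul_left _ hkk)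
          _ < 4 * h ^ 2 * m ^ k := hlt
      have hstep3 : (4 * h ^ 2) * (2 * cnt) < (4 * h ^ 2) * m ^ k := by
        calc (4 * h ^ 2) * (2 * cnt) = 8 * h ^ 2 * cnt := by ring
          _ < 4 * h ^ 2 * m ^ k := hstep2
      exact Nat.lt_of_mul_lt_mul_left hstep3
    rw [hcnt] at hnat
    have hcast : (2 : ℝ) * ((Finset.univ.filter (fun φ : Fin k → V =>
        (∀ i, φ i ∈ S i) ∧ ∃ i j, i ≠ j ∧ G.Adj (φ i) (φ j))).card : ℝ) < (m : ℝ) ^ k := by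
      exact_mod_cast hnat
    linarith
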